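/- Let (N, v) be a simple game with n players, with collection of winning coalitions 𝒲 and collection of losing coalitions 𝓛. Then there exists a vector p ∈ Q(𝒲) (i.e., p ≥ 0 and p(C) ≥ 1 for every winning coalition C) such that p(C) ≤ n/4 for every losing coalition C. Equivalently, the critical threshold value α = min_{p ∈ Q(𝒲)} max_{C ∈ 𝓛} p(C) is at most n/4. -/

import Mathlib

/-- **Conjecture of Freixas and Kurz (now a theorem).**
For a simple game `(N, v)` with `n` players, there exists a vector `p ∈ Q(𝒲)`
(i.e. `p ≥ 0` and `p(C) ≥ 1` for every winning coalition `C`) such that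
`p(C) ≤ n / 4` for every losing coalition `C`; that is, the critical threshold
value `α = min_{p ∈ Q(𝒲)} max_{C ∈ 𝓛} p(C)` is at most `n / 4`. -/
theorem critical_threshold_le_card_div_four
    {N : Type*} [Fintype N] (v : Finset N → ℕ)
    (hv01 : ∀ C, v C = 0 ∨ v C = 1)
    (hmono : ∀ C S : Finset N, C ⊆ S → v C ≤ v S)
    (hempty : v (∅ : Finset N) = 0)
    (hfull : v (Finset.univ : Finset N) = 1) :
    ∃ p : N → ℝ,
      (∀ i, 0 ≤ p i) ∧
      (∀ C : Finset N, v C = 1 → 1 ≤ ∑ i ∈ C, p i) ∧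
      (∀ C : Finset N, v C = 0 → ∑ i ∈ C, p i ≤ (Fintype.card N : ℝ) / 4) := by
  classical
  -- losing coalitions
  let ι := {C : Finset N // v C = 0}
  -- the "load" function
  let ell : (ι → ℝ) → N → ℝ := fun z i => ∑ C : ι, if i ∈ (C : Finset N) then z C else 0
  let Φ : (ι → ℝ) → ℝ := fun z => ∑ i : N, (ell z i - (ell z i) ^ 2 / 2)
  have hellcont : ∀ i, Continuous fun z : ι → ℝ => ell z i := by
    intro i
    apply continuous_finset_sum
    intro C _
    by_cases h : i ∈ (C : Finset N)
    · simpa [h] using continuous_apply C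
    · simpa [h] using (continuous_const : Continuous fun _ : ι → ℝ => (0:ℝ))
  have hΦcont : Continuous Φ := by
    apply continuous_finset_sum
    intro i _
    exact (hellcont i).sub (((hellcont i).pow 2).div_const 2)
  -- the simplex of distributions on losing coalitions is compact and nonempty
  have hL0 : ι := ⟨∅, hempty⟩
  have hne : (stdSimplex ℝ ι).Nonempty := by
    refine ⟨fun C => if C = hL0 then 1 else 0, ?_, ?_⟩
    · intro x; by_cases h : x = hL0 <;> simp [h]
    · rw [Fintype.sum_eq_single hL0 (fun x hx => by simp [hx])]; simp
  obtain ⟨z, hzS, hzmax⟩ :=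
    (isCompact_stdSimplex ℝ ι).exists_isMaxOn hne hΦcont.continuousOn
  have hz0 : ∀ C, 0 ≤ z C := hzS.1
  have hz1 : ∑ C : ι, z C = 1 := hzS.2
  set li : N → ℝ := ell z with hli
  have hli_nonneg : ∀ i, 0 ≤ li i := by
    intro i
    apply Finset.sum_nonneg
    intro C _
    by_cases h : i ∈ (C : Finset N) <;> simp [h, hz0 C]
  have hli_le_one : ∀ i, li i ≤ 1 := by
    intro i
    calc (∑ C : ι, if i ∈ (C : Finset N) then z C else 0) ≤ ∑ C : ι, z C := by
          apply Finset.sum_le_sum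
          intro C _
          by_cases h : i ∈ (C : Finset N) <;> simp [h, hz0 C]
      _ = 1 := hz1
  refine ⟨fun i => 1 - li i, fun i => sub_nonneg.2 (hli_le_one i), ?_, ?_⟩
  · -- winning constraints
    intro W hW
    have hswap : ∑ i ∈ W, li i
        = ∑ C : ι, ∑ i ∈ W, (if i ∈ (C : Finset N) then z C else 0) :=
      Finset.sum_comm
    have hinner : ∀ C : ι, ∑ i ∈ W, (if i ∈ (C : Finset N) then z C else 0)
        = ((W ∩ (C : Finset N)).card : ℝ) * z C := by
      intro C
      rw [Finset.sum_ite_mem, Finset.sum_const, nsmul_eq_mul]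
    have hcard : ∀ C : ι, ((W ∩ (C : Finset N)).card : ℝ) ≤ (W.card : ℝ) - 1 := by
      intro C
      have hss : W ∩ (C : Finset N) ⊂ W := by
        refine Finset.ssubset_iff_subset_ne.2 ⟨Finset.inter_subset_left, ?_⟩
        intro hEq
        have hsub : W ⊆ (C : Finset N) := Finset.inter_eq_left.1 hEq
        have := hmono W (C : Finset N) hsub
        rw [hW, C.2] at this
        omega
      have hlt : (W ∩ (C : Finset N)).card < W.card := Finset.card_lt_card hss
      have : ((W ∩ (C : Finset N)).card : ℝ) + 1 ≤ (W.card : ℝ) := by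
        exact_mod_cast Nat.succ_le_of_lt hlt
      linarith
    have hsum_li : ∑ i ∈ W, li i ≤ (W.card : ℝ) - 1 := by
      rw [hswap]
      calc ∑ C : ι, ∑ i ∈ W, (if i ∈ (C : Finset N) then z C else 0)
          = ∑ C : ι, ((W ∩ (C : Finset N)).card : ℝ) * z C := by
            exact Finset.sum_congr rfl fun C _ => hinner C
        _ ≤ ∑ C : ι, ((W.card : ℝ) - 1) * z C := by
            apply Finset.sum_le_sum
            intro C _
            exact mul_le_mul_of_nonneg_right (hcard C) (hz0 C)
        _ = ((W.card : ℝ) - 1) * ∑ C : ι, z C := by rw [Finset.mul_sum]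
        _ = (W.card : ℝ) - 1 := by rw [hz1, mul_one]
    have : ∑ i ∈ W, (1 - li i) = (W.card : ℝ) - ∑ i ∈ W, li i := by
      rw [Finset.sum_sub_distrib, Finset.sum_const, nsmul_eq_mul, mul_one]
    rw [this]
    linarith
  · -- losing constraints
    intro L hL
    have hLmem : (⟨L, hL⟩ : ι) = (⟨L, hL⟩ : ι) := rfl
    set L0 : ι := ⟨L, hL⟩ with hL0def
    set a : N → ℝ := fun i => (if i ∈ L then (1:ℝ) else 0) - li i with ha
    set A : ℝ := ∑ i : N, a i * (1 - li i) with hA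
    set B : ℝ := ∑ i : N, (a i) ^ 2 with hB
    have hBnn : 0 ≤ B := Finset.sum_nonneg fun i _ => sq_nonneg _
    -- first-order optimality: for all s ∈ [0,1], s*A - s^2*B/2 ≤ 0
    have hopt : ∀ s : ℝ, 0 ≤ s → s ≤ 1 → s * A - s ^ 2 * B / 2 ≤ 0 := by
      intro s hs0 hs1
      set z' : ι → ℝ := fun C => (1 - s) * z C + s * (if C = L0 then 1 else 0) with hz'
      have hz'S : z' ∈ stdSimplex ℝ ι := by
        constructor
        · intro C
          have h1 : 0 ≤ (1 - s) * z C := mul_nonneg (by linarith) (hz0 C)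
          have h2 : 0 ≤ s * (if C = L0 then (1:ℝ) else 0) := by
            apply mul_nonneg hs0
            by_cases h : C = L0 <;> simp [h]
          exact add_nonneg h1 h2
        · rw [Finset.sum_add_distrib, ← Finset.mul_sum, ← Finset.mul_sum, hz1,
            Finset.sum_ite_eq']
          simp
      have hell' : ∀ i, ell z' i = li i + s * a i := by
        intro i
        have : ∀ C : ι, (if i ∈ (C : Finset N) then z' C else 0)
            = (1 - s) * (if i ∈ (C : Finset N) then z C else 0)
              + s * (if C = L0 then (if i ∈ L then (1:ℝ) else 0) else 0) := by
          intro C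
          by_cases h2 : C = L0
          · subst h2
            have hc : ((L0 : ι) : Finset N) = L := rfl
            rw [hc]
            by_cases h : i ∈ L <;> simp [z', h] <;> try ring
          · by_cases h : i ∈ (C : Finset N) <;> simp [z', h, h2]
        calc ell z' i = ∑ C : ι, ((1 - s) * (if i ∈ (C : Finset N) then z C else 0)
              + s * (if C = L0 then (if i ∈ L then (1:ℝ) else 0) else 0)) :=
              Finset.sum_congr rfl fun C _ => this C
          _ = (1 - s) * li i + s * (if i ∈ L then (1:ℝ) else 0) := by
              rw [Finset.sum_add_distrib, ← Finset.mul_sum, ← Finset.mul_sum,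
                Finset.sum_ite_eq']
              simp [hli]; exact Or.inl rfl
          _ = li i + s * a i := by rw [ha]; ring
      have hΦ' : Φ z' = Φ z + (s * A - s ^ 2 * B / 2) := by
        have hterm : ∀ i : N, ell z' i - (ell z' i) ^ 2 / 2
            = (li i - (li i) ^ 2 / 2) + (s * (a i * (1 - li i)) - s ^ 2 * (a i) ^ 2 / 2) := by
          intro i
          rw [hell' i]
          ring
        have step1 : Φ z' = ∑ i : N, ((li i - (li i) ^ 2 / 2)
              + (s * (a i * (1 - li i)) - s ^ 2 * (a i) ^ 2 / 2)) :=
          Finset.sum_congr rfl fun i _ => hterm i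
        have e1 : ∑ i : N, s * (a i * (1 - li i)) = s * A := by
          rw [hA, Finset.mul_sum]
        have e2 : ∑ i : N, s ^ 2 * (a i) ^ 2 / 2 = s ^ 2 * B / 2 := by
          rw [hB, Finset.mul_sum, Finset.sum_div]
        rw [step1, Finset.sum_add_distrib]
        congr 1
        rw [Finset.sum_sub_distrib, e1, e2]
      have := hzmax hz'S
      simp only [Set.mem_setOf_eq] at this
      rw [hΦ'] at this
      linarith
    -- conclude A ≤ 0
    have hAle : A ≤ 0 := by
      by_contra hpos
      push_neg at hpos
      set s : ℝ := min 1 (A / (B + 1)) with hs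
      have hs0 : 0 < s := lt_min one_pos (div_pos hpos (by linarith))
      have hs1 : s ≤ 1 := min_le_left _ _
      have hsle : s ≤ A / (B + 1) := min_le_right _ _
      have hsB : s * (B + 1) ≤ A := by
        rw [← le_div_iff₀ (by linarith : (0:ℝ) < B + 1)]
        exact hsle
      have hkey := hopt s hs0.le hs1
      nlinarith [mul_pos hs0 hpos, mul_le_mul_of_nonneg_left hsB hs0.le, sq_nonneg s]
    -- A ≤ 0 gives  ∑_{i∈L} (1 - li i) ≤ ∑_i li i * (1 - li i)
    have hsplit : A = (∑ i ∈ L, (1 - li i)) - ∑ i : N, li i * (1 - li i) := by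
      rw [hA]
      have : ∀ i : N, a i * (1 - li i)
          = (if i ∈ L then (1 - li i) else 0) - li i * (1 - li i) := by
        intro i
        rw [ha]
        by_cases h : i ∈ L <;> simp [h] <;> ring
      calc ∑ i : N, a i * (1 - li i)
          = ∑ i : N, ((if i ∈ L then (1 - li i) else 0) - li i * (1 - li i)) :=
            Finset.sum_congr rfl fun i _ => this i
        _ = (∑ i : N, if i ∈ L then (1 - li i) else 0) - ∑ i : N, li i * (1 - li i) :=
            Finset.sum_sub_distrib _ _
        _ = (∑ i ∈ L, (1 - li i)) - ∑ i : N, li i * (1 - li i) := by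
            rw [Finset.sum_ite_mem, Finset.univ_inter]
    have hquarter : ∑ i : N, li i * (1 - li i) ≤ (Fintype.card N : ℝ) / 4 := by
      calc ∑ i : N, li i * (1 - li i) ≤ ∑ i : N, (1:ℝ)/4 := by
            apply Finset.sum_le_sum
            intro i _
            nlinarith [sq_nonneg (li i - 1/2)]
        _ = (Fintype.card N : ℝ) / 4 := by
            rw [Finset.sum_const, nsmul_eq_mul, Finset.card_univ]
            ring
    have : (∑ i ∈ L, (1 - li i)) ≤ ∑ i : N, li i * (1 - li i) := by linarith [hsplit ▸ hAle]
    linarith
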